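/- Let 𝓑 be a basis of a Banach space X and 𝐧 a strictly increasing sequence of positive integers. Then 𝓑 is 1-(𝐧, strong partially greedy) (i.e., (𝐧, strong partially greedy) with constant C = 1) if and only if 𝓑 is 1-(𝐧, PSLC) (i.e., (𝐧, PSLC) with constant C = 1). -/

import Mathlib

open scoped BigOperators ENNReal NNReal

/-- The collection `𝕋(𝐧)`: pairs of finite sets `(A, D)` with `A ⊆ 𝐧`, `|A| ≤ |D|`
and `A < D ∩ 𝐧`. -/
def TPair (seq : ℕ → ℕ) (A D : Finset ℕ) : Prop :=
  (↑A : Set ℕ) ⊆ Set.range seq ∧ A.card ≤ D.card ∧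
    ∀ a ∈ A, ∀ d ∈ D, d ∈ Set.range seq → a < d

/-- The collection `𝕊(𝐧)`: pairs of finite sets `(A, D)` with `A ⊆ 𝐧` and `|A| ≤ |D|`. -/
def SPair (seq : ℕ → ℕ) (A D : Finset ℕ) : Prop :=
  (↑A : Set ℕ) ⊆ Set.range seq ∧ A.card ≤ D.card

/-- The interval `{n_{k+1}, …, n_{k+m}}` of `m` consecutive terms of the sequence `seq`
(0-indexed: `seq k, …, seq (k+m-1)`). -/
def intervalSet (seq : ℕ → ℕ) (k m : ℕ) : Finset ℕ :=
  (Finset.range m).image fun i => seq (k + i)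

/-- The (1-based) index `ι(max A)` of the largest element of `A` in the sequence `seq`
(`0` if `A` is empty). -/
noncomputable def iotaMax (seq : ℕ → ℕ) (A : Finset ℕ) : ℕ :=
  if h : A.Nonempty then sInf {i | seq i = A.max' h} + 1 else 0

/-- The collection `𝕋^ω(𝐧)`: pairs of finite sets `(A, D)` with `A ⊆ 𝐧`, `ω(A) ≤ ω(D)`
and `A < D ∩ 𝐧`. -/
def WTPair (w : Set ℕ → ℝ≥0∞) (seq : ℕ → ℕ) (A D : Finset ℕ) : Prop :=
  (↑A : Set ℕ) ⊆ Set.range seq ∧ w (↑A : Set ℕ) ≤ w (↑D : Set ℕ) ∧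
    ∀ a ∈ A, ∀ d ∈ D, d ∈ Set.range seq → a < d

/-- A (semi-normalized) basis `(e_n)` of a Banach space `X`, together with its biorthogonal
functionals `(e_n^*)`: the span of the `e_n` is norm-dense, `e_j^*(e_k) = δ_{jk}`, and the
norms of the `e_n` and `e_n^*` are bounded above and away from zero. -/
structure BasisOf (𝕜 : Type*) (X : Type*) [RCLike 𝕜] [NormedAddCommGroup X]
    [NormedSpace 𝕜 X] where
  e : ℕ → X
  coord : ℕ → X →L[𝕜] 𝕜
  dense_span : Dense (↑(Submodule.span 𝕜 (Set.range e)) : Set X)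
  biorth : ∀ j k : ℕ, coord j (e k) = if j = k then (1 : 𝕜) else 0
  norm_bounds : ∃ c₁ c₂ : ℝ, 0 < c₁ ∧ (∀ n, c₁ ≤ ‖e n‖ ∧ c₁ ≤ ‖coord n‖) ∧
    ∀ n, ‖e n‖ ≤ c₂ ∧ ‖coord n‖ ≤ c₂

namespace BasisOf

variable {𝕜 : Type*} {X : Type*} [RCLike 𝕜] [NormedAddCommGroup X] [NormedSpace 𝕜 X]
variable (B : BasisOf 𝕜 X)

/-- The projection `P_A(x) = ∑_{n ∈ A} e_n^*(x) e_n`. -/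
noncomputable def proj (A : Finset ℕ) (x : X) : X := ∑ n ∈ A, B.coord n x • B.e n

/-- `1_{εA} = ∑_{n ∈ A} ε_n e_n`. -/
noncomputable def sgnSum (ε : ℕ → 𝕜) (A : Finset ℕ) : X := ∑ n ∈ A, ε n • B.e n

/-- `1_A = ∑_{n ∈ A} e_n`. -/
noncomputable def ones (A : Finset ℕ) : X := ∑ n ∈ A, B.e n

/-- `P^𝐧_m(x) = ∑_{i=1}^m e_{n_i}^*(x) e_{n_i}`, the projection on the first `m` terms of the
subsequence given by `seq`. -/
noncomputable def projSeq (seq : ℕ → ℕ) (m : ℕ) (x : X) : X :=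
  ∑ i ∈ Finset.range m, B.coord (seq i) x • B.e (seq i)

/-- `A` is a greedy set of `x`: the coefficients inside `A` dominate those outside. -/
def IsGreedySet (x : X) (A : Finset ℕ) : Prop :=
  ∀ a ∈ A, ∀ b ∉ A, ‖B.coord b x‖ ≤ ‖B.coord a x‖

/-- The support `{n : e_n^*(x) ≠ 0}`. -/
def supp (x : X) : Set ℕ := {n | B.coord n x ≠ 0}

/-- `𝓑` is `C`-(`𝐧`, strong partially greedy):
`‖x - G_m(x)‖ ≤ C ⋅ σ̂^𝐧_m(x)` for all `x`, all `m ≥ 1` and all greedy sums. -/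
def SPGWith (seq : ℕ → ℕ) (C : ℝ) : Prop :=
  ∀ x : X, ∀ m : ℕ, 1 ≤ m → ∀ A : Finset ℕ, A.card = m → B.IsGreedySet x A →
    ∀ k : ℕ, k ≤ m → ‖x - B.proj A x‖ ≤ C * ‖x - B.projSeq seq k x‖

/-- `𝓑` is (`𝐧`, strong partially greedy). -/
def SPG (seq : ℕ → ℕ) : Prop := ∃ C : ℝ, 1 ≤ C ∧ B.SPGWith seq C

/-- `𝓑` is quasi-greedy with constant `C`. -/
def QuasiGreedyWith (C : ℝ) : Prop :=
  ∀ x : X, ∀ A : Finset ℕ, A.Nonempty → B.IsGreedySet x A → ‖B.proj A x‖ ≤ C * ‖x‖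

/-- `𝓑` is quasi-greedy. -/
def QuasiGreedy : Prop := ∃ C : ℝ, B.QuasiGreedyWith C

/-- `𝓑` is suppression quasi-greedy with constant `C`. -/
def SuppQGWith (C : ℝ) : Prop :=
  ∀ x : X, ∀ A : Finset ℕ, A.Nonempty → B.IsGreedySet x A → ‖x - B.proj A x‖ ≤ C * ‖x‖

/-- `𝓑` is `C`-(`𝐧`, PSLC). -/
def PSLCWith (seq : ℕ → ℕ) (C : ℝ) : Prop :=
  ∀ x : X, (∀ n, ‖B.coord n x‖ ≤ 1) → ∀ A D : Finset ℕ, TPair seq A D →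
    (∀ d ∈ D, B.coord d x = 0) →
    (∀ a ∈ A, ∀ j : ℕ, (j ∈ D ∨ B.coord j x ≠ 0) → j ∈ Set.range seq → a < j) →
    ∀ ε δ : ℕ → 𝕜, (∀ n, ‖ε n‖ = 1) → (∀ n, ‖δ n‖ = 1) →
      ‖x + B.sgnSum ε A‖ ≤ C * ‖x + B.sgnSum δ D‖

/-- `𝓑` is (`𝐧`, PSLC). -/
def PSLC (seq : ℕ → ℕ) : Prop := ∃ C : ℝ, 1 ≤ C ∧ B.PSLCWith seq C

/-- `𝓑` is (`𝐧`, superconservative) with constant `C`. -/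
def SuperconservativeWith (seq : ℕ → ℕ) (C : ℝ) : Prop :=
  ∀ A D : Finset ℕ, TPair seq A D →
    ∀ ε δ : ℕ → 𝕜, (∀ n, ‖ε n‖ = 1) → (∀ n, ‖δ n‖ = 1) →
      ‖B.sgnSum ε A‖ ≤ C * ‖B.sgnSum δ D‖

/-- `𝓑` is (`𝐧`, superconservative). -/
def Superconservative (seq : ℕ → ℕ) : Prop :=
  ∃ C : ℝ, 0 < C ∧ B.SuperconservativeWith seq C

/-- `𝓑` is (`𝐧`, conservative) with constant `C`. -/
def ConservativeWith (seq : ℕ → ℕ) (C : ℝ) : Prop :=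
  ∀ A D : Finset ℕ, TPair seq A D → ‖B.ones A‖ ≤ C * ‖B.ones D‖

/-- `𝓑` is (`𝐧`, conservative). -/
def Conservative (seq : ℕ → ℕ) : Prop := ∃ C : ℝ, 0 < C ∧ B.ConservativeWith seq C

/-- `𝓑` is (`𝐧`, democratic) with constant `C`. -/
def DemocraticWith (seq : ℕ → ℕ) (C : ℝ) : Prop :=
  ∀ A D : Finset ℕ, SPair seq A D → ‖B.ones A‖ ≤ C * ‖B.ones D‖

/-- `𝓑` is (`𝐧`, democratic). -/
def Democratic (seq : ℕ → ℕ) : Prop := ∃ C : ℝ, B.DemocraticWith seq C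

/-- `𝓑` is (`𝐧`, almost greedy) with constant `C`:
`‖x - G_m(x)‖ ≤ C σ̃^𝐧_m(x)` where `σ̃^𝐧_m(x) = inf {‖x - P_D(x)‖ : D ⊆ 𝐧, |D| = m}`. -/
def AlmostGreedyWith (seq : ℕ → ℕ) (C : ℝ) : Prop :=
  ∀ x : X, ∀ m : ℕ, 1 ≤ m → ∀ A : Finset ℕ, A.card = m → B.IsGreedySet x A →
    ∀ D : Finset ℕ, (↑D : Set ℕ) ⊆ Set.range seq → D.card = m →
      ‖x - B.proj A x‖ ≤ C * ‖x - B.proj D x‖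

/-- `𝓑` is (`𝐧`, almost greedy). -/
def AlmostGreedy (seq : ℕ → ℕ) : Prop := ∃ C : ℝ, 1 ≤ C ∧ B.AlmostGreedyWith seq C

/-- `𝓑` is 1-unconditional. -/
def OneUnconditional : Prop :=
  ∀ (F : Finset ℕ) (a b : ℕ → 𝕜), (∀ n, ‖a n‖ ≤ ‖b n‖) →
    ‖∑ n ∈ F, a n • B.e n‖ ≤ ‖∑ n ∈ F, b n • B.e n‖

/-- `𝓑` is `C`-(`𝐧`, consecutive almost greedy) of type I. -/
def CAGIWith (seq : ℕ → ℕ) (C : ℝ) : Prop :=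
  ∀ x : X, ∀ m : ℕ, 1 ≤ m → ∀ A : Finset ℕ, A.card = m → B.IsGreedySet x A →
    ∀ k : ℕ, ‖x - B.proj A x‖ ≤ C * ‖x - B.proj (intervalSet seq k m) x‖

/-- `𝓑` is `C`-(`𝐧`, consecutive almost greedy) of type II. -/
def CAGIIWith (seq : ℕ → ℕ) (C : ℝ) : Prop :=
  ∀ x : X, ∀ m : ℕ, 1 ≤ m → ∀ A : Finset ℕ, A.card = m → B.IsGreedySet x A →
    ∀ k p : ℕ, ((↑(intervalSet seq k p) : Set ℕ) ∩ B.supp x).ncard ≤ m →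
      ‖x - B.proj A x‖ ≤ C * ‖x - B.proj (intervalSet seq k p) x‖

/-- `𝓑` is `C`-(`𝐧`, RSLC). -/
def RSLCWith (seq : ℕ → ℕ) (C : ℝ) : Prop :=
  ∀ x : X, (∀ n, ‖B.coord n x‖ ≤ 1) → ∀ A D : Finset ℕ, SPair seq A D →
    (∀ d ∈ D, B.coord d x = 0) →
    (∀ j : ℕ, (j ∈ D ∨ B.coord j x ≠ 0) → j ∈ Set.range seq →
      (∀ a ∈ A, j < a) ∨ (∀ a ∈ A, a < j)) →
    ∀ ε δ : ℕ → 𝕜, (∀ n, ‖ε n‖ = 1) → (∀ n, ‖δ n‖ = 1) →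
      ‖x + B.sgnSum ε A‖ ≤ C * ‖x + B.sgnSum δ D‖

/-- `𝓑` is `C`-(`𝐧`, SLC). -/
def SLCWith (seq : ℕ → ℕ) (C : ℝ) : Prop :=
  ∀ x : X, (∀ n, ‖B.coord n x‖ ≤ 1) → ∀ A D : Finset ℕ, SPair seq A D →
    Disjoint A D → (∀ a ∈ A, B.coord a x = 0) → (∀ d ∈ D, B.coord d x = 0) →
    ∀ ε δ : ℕ → 𝕜, (∀ n, ‖ε n‖ = 1) → (∀ n, ‖δ n‖ = 1) →
      ‖x + B.sgnSum ε A‖ ≤ C * ‖x + B.sgnSum δ D‖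

/-- The Lebesgue-type parameter `L̂^𝐧_m`: the least constant `C ∈ [0,∞]` with
`‖x - G_m(x)‖ ≤ C σ̂^𝐧_m(x)` for all `x` and all greedy sums `G_m(x)`. -/
noncomputable def Lhat (seq : ℕ → ℕ) (m : ℕ) : ℝ≥0∞ :=
  sInf {C : ℝ≥0∞ | ∀ (x : X) (A : Finset ℕ), A.card = m → B.IsGreedySet x A →
    ∀ k : ℕ, k ≤ m →
      (‖x - B.proj A x‖₊ : ℝ≥0∞) ≤ C * (‖x - B.projSeq seq k x‖₊ : ℝ≥0∞)}

/-- The parameter `g_m^c`. -/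
noncomputable def gc (m : ℕ) : ℝ≥0∞ :=
  ⨆ (x : X) (_ : x ≠ 0) (A : Finset ℕ) (_ : A.card ≤ m) (_ : B.IsGreedySet x A),
    (‖x - B.proj A x‖₊ : ℝ≥0∞) / (‖x‖₊ : ℝ≥0∞)

/-- The parameter `g̃_m`. -/
noncomputable def gtilde (m : ℕ) : ℝ≥0∞ :=
  ⨆ (x : X) (_ : x ≠ 0) (A : Finset ℕ) (A' : Finset ℕ) (_ : A ⊆ A') (_ : A.card < A'.card)
    (_ : A'.card ≤ m) (_ : B.IsGreedySet x A) (_ : B.IsGreedySet x A'),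
    (‖B.proj A' x - B.proj A x‖₊ : ℝ≥0∞) / (‖x‖₊ : ℝ≥0∞)

/-- The parameter `sc^𝐧_m`. -/
noncomputable def scParam (seq : ℕ → ℕ) (m : ℕ) : ℝ≥0∞ :=
  ⨆ (A : Finset ℕ) (D : Finset ℕ) (_ : TPair seq A D) (_ : D.card ≤ m)
    (_ : ∀ a ∈ A, a ≤ seq (m - 1)) (ε : ℕ → 𝕜) (_ : ∀ n, ‖ε n‖ = 1)
    (δ : ℕ → 𝕜) (_ : ∀ n, ‖δ n‖ = 1),
    (‖B.sgnSum ε A‖₊ : ℝ≥0∞) / (‖B.sgnSum δ D‖₊ : ℝ≥0∞)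

/-- The parameter `ω^𝐧_m`. -/
noncomputable def omegaParam (seq : ℕ → ℕ) (m : ℕ) : ℝ≥0∞ :=
  ⨆ (x : X) (_ : ∀ n, ‖B.coord n x‖ ≤ 1) (A : Finset ℕ) (D : Finset ℕ)
    (_ : (↑A : Set ℕ) ⊆ Set.range seq) (_ : A.card ≤ D.card) (_ : D.card ≤ m)
    (_ : ∀ a ∈ A, a ≤ seq (m - 1)) (_ : ∀ d ∈ D, B.coord d x = 0)
    (_ : ∀ a ∈ A, ∀ j : ℕ, (j ∈ D ∨ B.coord j x ≠ 0) → j ∈ Set.range seq → a < j)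
    (ε : ℕ → 𝕜) (_ : ∀ n, ‖ε n‖ = 1) (δ : ℕ → 𝕜) (_ : ∀ n, ‖δ n‖ = 1),
    (‖x + B.sgnSum ε A‖₊ : ℝ≥0∞) / (‖x + B.sgnSum δ D‖₊ : ℝ≥0∞)

/-- The parameter `ω̂^𝐧_m`. -/
noncomputable def omegaHatParam (seq : ℕ → ℕ) (m : ℕ) : ℝ≥0∞ :=
  ⨆ (x : X) (_ : ∀ n, ‖B.coord n x‖ ≤ 1) (A : Finset ℕ) (D : Finset ℕ)
    (_ : (↑A : Set ℕ) ⊆ Set.range seq) (_ : A.card ≤ D.card) (_ : D.card ≤ m)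
    (_ : ∀ a ∈ A, a ≤ seq (m - 1))
    (_ : ∀ d ∈ D, B.coord d (x - B.proj A x) = 0)
    (_ : ∀ a ∈ A, ∀ j : ℕ, (j ∈ D ∨ B.coord j (x - B.proj A x) ≠ 0) →
      j ∈ Set.range seq → a < j)
    (ε : ℕ → 𝕜) (_ : ∀ n, ‖ε n‖ = 1),
    (‖x‖₊ : ℝ≥0∞) / (‖x - B.proj A x + B.sgnSum ε D‖₊ : ℝ≥0∞)

/-- `κ = sup_{j,k} ‖e_j‖ ‖e_k^*‖`. -/
noncomputable def kappa : ℝ≥0∞ :=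
  ⨆ (j : ℕ) (k : ℕ), ((‖B.e j‖₊ * ‖B.coord k‖₊ : ℝ≥0) : ℝ≥0∞)

/-- `𝓑` is `𝐬`-(`𝐧`, strong partially greedy) with constant `C`:
the strong partially greedy inequality for all orders `m` in the sequence `s`. -/
def SPGOnWith (seq : ℕ → ℕ) (s : ℕ → ℕ) (C : ℝ) : Prop :=
  ∀ x : X, ∀ i : ℕ, ∀ A : Finset ℕ, A.card = s i → B.IsGreedySet x A →
    ∀ k : ℕ, k ≤ s i → ‖x - B.proj A x‖ ≤ C * ‖x - B.projSeq seq k x‖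

/-- `𝓑` is (`λ`, `𝐧`, strong partially greedy). -/
def LamSPG (seq : ℕ → ℕ) (lam : ℝ) : Prop :=
  ∃ C : ℝ, 1 ≤ C ∧ ∀ x : X, ∀ m : ℕ, 1 ≤ m →
    ∀ A : Finset ℕ, A.card = ⌈lam * (m : ℝ)⌉₊ → B.IsGreedySet x A →
      ∀ k : ℕ, k ≤ m → ‖x - B.proj A x‖ ≤ C * ‖x - B.projSeq seq k x‖

/-- `𝓑` is (`λ`, `𝐧`, PSLC). -/
def LamPSLC (seq : ℕ → ℕ) (lam : ℝ) : Prop :=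
  ∃ C : ℝ, 1 ≤ C ∧ ∀ x : X, (∀ n, ‖B.coord n x‖ ≤ 1) →
    ∀ A D : Finset ℕ, (↑A : Set ℕ) ⊆ Set.range seq → A.card ≤ D.card →
      (lam - 1) * (iotaMax seq A : ℝ) + A.card ≤ D.card →
      (∀ d ∈ D, B.coord d x = 0) →
      (∀ a ∈ A, ∀ j : ℕ, (j ∈ D ∨ B.coord j x ≠ 0) → j ∈ Set.range seq → a < j) →
      ∀ ε δ : ℕ → 𝕜, (∀ n, ‖ε n‖ = 1) → (∀ n, ‖δ n‖ = 1) →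
        ‖x + B.sgnSum ε A‖ ≤ C * ‖x + B.sgnSum δ D‖

/-- `𝓑` is (`λ`, `𝐧`, superconservative). -/
def LamSuperconservative (seq : ℕ → ℕ) (lam : ℝ) : Prop :=
  ∃ C : ℝ, 0 < C ∧ ∀ A D : Finset ℕ, TPair seq A D →
    (lam - 1) * (iotaMax seq A : ℝ) + A.card ≤ D.card →
    ∀ ε δ : ℕ → 𝕜, (∀ n, ‖ε n‖ = 1) → (∀ n, ‖δ n‖ = 1) →
      ‖B.sgnSum ε A‖ ≤ C * ‖B.sgnSum δ D‖

/-- `𝓑` is (`λ`, `𝐧`, conservative). -/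
def LamConservative (seq : ℕ → ℕ) (lam : ℝ) : Prop :=
  ∃ C : ℝ, 0 < C ∧ ∀ A D : Finset ℕ, TPair seq A D →
    (lam - 1) * (iotaMax seq A : ℝ) + A.card ≤ D.card →
    ‖B.ones A‖ ≤ C * ‖B.ones D‖

/-- `𝓑` is `ω`-(`𝐧`, strong partially greedy) for the weight on sets `w`. -/
def WSPG (seq : ℕ → ℕ) (w : Set ℕ → ℝ≥0∞) : Prop :=
  ∃ C : ℝ, 1 ≤ C ∧ ∀ x : X, ∀ m : ℕ, 1 ≤ m → ∀ A : Finset ℕ, A.card = m →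
    B.IsGreedySet x A → ∀ m' : ℕ,
      w (↑((Finset.range m').image seq \ A) : Set ℕ) ≤
        w (↑(A \ (Finset.range m').image seq) : Set ℕ) →
      ‖x - B.proj A x‖ ≤ C * ‖x - B.proj ((Finset.range m').image seq) x‖

/-- `𝓑` is `ω`-(`𝐧`, PSLC). -/
def WPSLC (seq : ℕ → ℕ) (w : Set ℕ → ℝ≥0∞) : Prop :=
  ∃ C : ℝ, 1 ≤ C ∧ ∀ x : X, (∀ n, ‖B.coord n x‖ ≤ 1) →
    ∀ A D : Finset ℕ, WTPair w seq A D →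
      (∀ d ∈ D, B.coord d x = 0) →
      (∀ a ∈ A, ∀ j : ℕ, (j ∈ D ∨ B.coord j x ≠ 0) → j ∈ Set.range seq → a < j) →
      ∀ ε δ : ℕ → 𝕜, (∀ n, ‖ε n‖ = 1) → (∀ n, ‖δ n‖ = 1) →
        ‖x + B.sgnSum ε A‖ ≤ C * ‖x + B.sgnSum δ D‖

/-- `𝓑` is `ω`-(`𝐧`, superconservative). -/
def WSuperconservative (seq : ℕ → ℕ) (w : Set ℕ → ℝ≥0∞) : Prop :=
  ∃ C : ℝ, 0 < C ∧ ∀ A D : Finset ℕ, WTPair w seq A D →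
    ∀ ε δ : ℕ → 𝕜, (∀ n, ‖ε n‖ = 1) → (∀ n, ‖δ n‖ = 1) →
      ‖B.sgnSum ε A‖ ≤ C * ‖B.sgnSum δ D‖

/-- `𝓑` is `ω`-(`𝐧`, conservative). -/
def WConservative (seq : ℕ → ℕ) (w : Set ℕ → ℝ≥0∞) : Prop :=
  ∃ C : ℝ, 0 < C ∧ ∀ A D : Finset ℕ, WTPair w seq A D → ‖B.ones A‖ ≤ C * ‖B.ones D‖

end BasisOf

/-- A Banach space over `𝕜` equipped with a basis. -/
structure BanachWithBasis (𝕜 : Type*) [RCLike 𝕜] where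
  carrier : Type
  [grp : NormedAddCommGroup carrier]
  [mod : NormedSpace 𝕜 carrier]
  [comp : CompleteSpace carrier]
  basis : BasisOf 𝕜 carrier

attribute [instance] BanachWithBasis.grp BanachWithBasis.mod BanachWithBasis.comp


namespace BasisOf
variable {𝕜 X : Type*} [RCLike 𝕜] [NormedAddCommGroup X] [NormedSpace 𝕜 X]

lemma coord_sum (B : BasisOf 𝕜 X) (n : ℕ) (S : Finset ℕ) (f : ℕ → 𝕜) :
    B.coord n (∑ a ∈ S, f a • B.e a) = if n ∈ S then f n else 0 := by
  classical
  have h1 : ∀ a ∈ S, B.coord n (f a • B.e a) = if a = n then f a else 0 := by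
    intro a _
    rw [map_smul, B.biorth n a, smul_eq_mul]
    rcases eq_or_ne a n with h | h
    · simp [h]
    · simp [h, Ne.symm h]
  rw [map_sum, Finset.sum_congr rfl h1, Finset.sum_ite_eq' S n f]

lemma coord_sgnSum (B : BasisOf 𝕜 X) (n : ℕ) (ε : ℕ → 𝕜) (A : Finset ℕ) :
    B.coord n (B.sgnSum ε A) = if n ∈ A then ε n else 0 := B.coord_sum n A ε

lemma coord_proj (B : BasisOf 𝕜 X) (n : ℕ) (S : Finset ℕ) (x : X) :
    B.coord n (B.proj S x) = if n ∈ S then B.coord n x else 0 :=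
  B.coord_sum n S (fun a => B.coord a x)

lemma convex_bound (B : BasisOf 𝕜 X) (u : X) (E : Finset ℕ) (c : ℕ → 𝕜) (t : ℝ)
    (M : ℝ) (hc : ∀ n ∈ E, ‖c n‖ ≤ t)
    (h : ∀ ε : ℕ → 𝕜, (∀ n, ‖ε n‖ = 1) → ‖u + (t : 𝕜) • B.sgnSum ε E‖ ≤ M) :
    ‖u + ∑ n ∈ E, c n • B.e n‖ ≤ M := by
  set v := u + ∑ n ∈ E, c n • B.e n with hv
  have hM0 : 0 ≤ M := le_trans (norm_nonneg _) (h (fun _ => 1) (fun _ => by simp))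
  by_cases hv0 : v = 0
  · rw [hv0, norm_zero]; exact hM0
  obtain ⟨g, hg1, hgv⟩ := exists_dual_vector 𝕜 v (norm_ne_zero_iff.2 hv0)
  classical
  set ε : ℕ → 𝕜 := fun n => if g (B.e n) = 0 then 1
      else (starRingEnd 𝕜) (g (B.e n)) / ((‖g (B.e n)‖ : ℝ) : 𝕜) with hε
  have hεnorm : ∀ n, ‖ε n‖ = 1 := by
    intro n; rw [hε]; dsimp only
    split_ifs with hn
    · simp
    · rw [norm_div, RCLike.norm_conj, RCLike.norm_ofReal, abs_norm,
        div_self (norm_ne_zero_iff.2 hn)]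
  have hεmul : ∀ n, ε n * g (B.e n) = ((‖g (B.e n)‖ : ℝ) : 𝕜) := by
    intro n; rw [hε]; dsimp only
    split_ifs with hn
    · simp [hn]
    · have hne : ((‖g (B.e n)‖ : ℝ) : 𝕜) ≠ 0 := by
        simpa using norm_ne_zero_iff.2 hn
      rw [div_mul_eq_mul_div, RCLike.conj_mul, sq, mul_div_assoc, div_self hne, mul_one]
  have key : ∀ n ∈ E, RCLike.re (c n * g (B.e n)) ≤ RCLike.re ((t:𝕜) * (ε n * g (B.e n))) := by
    intro n hn
    rw [hεmul n]
    have h2 : RCLike.re ((t:𝕜) * ((‖g (B.e n)‖ : ℝ) : 𝕜)) = t * ‖g (B.e n)‖ := by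
      rw [← RCLike.ofReal_mul, RCLike.ofReal_re]
    rw [h2]
    calc RCLike.re (c n * g (B.e n)) ≤ ‖c n * g (B.e n)‖ := RCLike.re_le_norm _
      _ = ‖c n‖ * ‖g (B.e n)‖ := norm_mul _ _
      _ ≤ t * ‖g (B.e n)‖ := mul_le_mul_of_nonneg_right (hc n hn) (norm_nonneg _)
  have hgvre : ‖v‖ = RCLike.re (g v) := by rw [hgv, RCLike.ofReal_re]
  have hexp : g v = g u + ∑ n ∈ E, c n * g (B.e n) := by
    rw [hv, map_add, map_sum]
    simp [smul_eq_mul]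
  have hexp2 : g (u + (t:𝕜) • B.sgnSum ε E) = g u + ∑ n ∈ E, (t:𝕜) * (ε n * g (B.e n)) := by
    rw [map_add, map_smul, smul_eq_mul, sgnSum, map_sum, Finset.mul_sum]
    simp [smul_eq_mul]
  calc ‖v‖ = RCLike.re (g u) + ∑ n ∈ E, RCLike.re (c n * g (B.e n)) := by
        rw [hgvre, hexp, map_add, map_sum]
    _ ≤ RCLike.re (g u) + ∑ n ∈ E, RCLike.re ((t:𝕜) * (ε n * g (B.e n))) :=
        add_le_add (le_refl _) (Finset.sum_le_sum key)
    _ = RCLike.re (g (u + (t:𝕜) • B.sgnSum ε E)) := by rw [hexp2, map_add, map_sum]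
    _ ≤ ‖g (u + (t:𝕜) • B.sgnSum ε E)‖ := RCLike.re_le_norm _
    _ ≤ ‖g‖ * ‖u + (t:𝕜) • B.sgnSum ε E‖ := g.le_opNorm _
    _ = ‖u + (t:𝕜) • B.sgnSum ε E‖ := by rw [hg1, one_mul]
    _ ≤ M := h ε hεnorm

end BasisOf

namespace BasisOf
variable {𝕜 X : Type*} [RCLike 𝕜] [NormedAddCommGroup X] [NormedSpace 𝕜 X]

/-- Suppression step from 1-PSLC with `A = ∅`: adding a single dominating coordinate
increases the norm. -/
lemma suppr_step (B : BasisOf 𝕜 X) {seq : ℕ → ℕ} (hP : B.PSLCWith seq 1)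
    (p : X) (d : ℕ) (c : 𝕜) (hc : c ≠ 0)
    (hpc : ∀ n, ‖B.coord n p‖ ≤ ‖c‖) (hpd : B.coord d p = 0) :
    ‖p‖ ≤ ‖p + c • B.e d‖ := by
  classical
  have hcpos : (0:ℝ) < ‖c‖ := norm_pos_iff.2 hc
  have hcK : ((‖c‖ : ℝ) : 𝕜) ≠ 0 := by
    simpa using norm_ne_zero_iff.2 hc
  set xp : X := ((‖c‖⁻¹ : ℝ) : 𝕜) • p with hxp
  set δ : ℕ → 𝕜 := fun n => if n = d then c / ((‖c‖ : ℝ) : 𝕜) else 1 with hδ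
  have hδ1 : ∀ n, ‖δ n‖ = 1 := by
    intro n; rw [hδ]; dsimp only
    split_ifs with hn
    · rw [norm_div, RCLike.norm_ofReal, abs_norm, div_self (norm_ne_zero_iff.2 hc)]
    · simp
  have hxpc : ∀ n, ‖B.coord n xp‖ ≤ 1 := by
    intro n
    rw [hxp, map_smul, smul_eq_mul, norm_mul, RCLike.norm_ofReal, abs_inv, abs_norm]
    rw [inv_mul_le_iff₀ hcpos, mul_one]
    exact hpc n
  have htp : TPair seq ∅ {d} := by
    refine ⟨by simp, by simp, by simp⟩
  have h := hP xp hxpc ∅ {d} htp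
    (by intro d' hd'
        simp only [Finset.mem_singleton] at hd'
        subst hd'
        rw [hxp, map_smul, smul_eq_mul, hpd, mul_zero])
    (by intro a ha; simp at ha)
    (fun _ => 1) δ (fun _ => by simp) hδ1
  rw [one_mul] at h
  have hA0 : B.sgnSum (fun _ => (1:𝕜)) (∅ : Finset ℕ) = 0 := by simp [sgnSum]
  have hD0 : B.sgnSum δ {d} = (c / ((‖c‖ : ℝ) : 𝕜)) • B.e d := by
    rw [sgnSum, Finset.sum_singleton, hδ]; simp
  rw [hA0, add_zero, hD0] at h
  have hsc : ((‖c‖ : ℝ) : 𝕜) • xp = p := by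
    rw [hxp, smul_smul, ← RCLike.ofReal_mul, mul_inv_cancel₀ (ne_of_gt hcpos)]
    simp
  have hsc2 : ((‖c‖ : ℝ) : 𝕜) • (xp + (c / ((‖c‖ : ℝ) : 𝕜)) • B.e d) = p + c • B.e d := by
    rw [smul_add, hsc, smul_smul, mul_div_cancel₀ _ hcK]
  calc ‖p‖ = ‖((‖c‖ : ℝ) : 𝕜) • xp‖ := by rw [hsc]
    _ = ‖c‖ * ‖xp‖ := by rw [norm_smul, RCLike.norm_ofReal, abs_norm]
    _ ≤ ‖c‖ * ‖xp + (c / ((‖c‖ : ℝ) : 𝕜)) • B.e d‖ :=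
        mul_le_mul_of_nonneg_left h (norm_nonneg _)
    _ = ‖((‖c‖ : ℝ) : 𝕜) • (xp + (c / ((‖c‖ : ℝ) : 𝕜)) • B.e d)‖ := by
        rw [norm_smul, RCLike.norm_ofReal, abs_norm]
    _ = ‖p + c • B.e d‖ := by rw [hsc2]

end BasisOf

namespace BasisOf
variable {𝕜 X : Type*} [RCLike 𝕜] [NormedAddCommGroup X] [NormedSpace 𝕜 X]

/-- Truncation lemma: replacing dominating coefficients by the common threshold `t`
(with the same signs) decreases the norm, given 1-PSLC. -/
lemma trunc_bound (B : BasisOf 𝕜 X) {seq : ℕ → ℕ} (hP : B.PSLCWith seq 1)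
    (u : X) (t : ℝ) (s δ : ℕ → 𝕜)
    (hδs : ∀ n, s n ≠ 0 → δ n = s n / ((‖s n‖ : ℝ) : 𝕜))
    (hu : ∀ n, ‖B.coord n u‖ ≤ t) (Bf : Finset ℕ)
    (hz : ∀ d ∈ Bf, B.coord d u = 0) (hts : ∀ d ∈ Bf, t ≤ ‖s d‖) :
    ∀ R : Finset ℕ, R ⊆ Bf → (∀ i ∈ Bf \ R, ∀ d ∈ R, ‖s i‖ ≤ ‖s d‖) →
      ‖u + ∑ i ∈ Bf \ R, s i • B.e i + (t:𝕜) • B.sgnSum δ R‖ ≤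
        ‖u + ∑ i ∈ Bf, s i • B.e i‖ := by
  classical
  have ht0 : 0 ≤ t := le_trans (norm_nonneg _) (hu 0)
  intro R
  induction R using Finset.strongInduction with
  | _ R ih =>
    intro hRB hsort
    rcases R.eq_empty_or_nonempty with rfl | hR
    · simp [sgnSum]
    obtain ⟨d, hdR, hdmin⟩ := R.exists_min_image (fun i => ‖s i‖) hR
    set R' := R.erase d with hR'def
    have hR'ss : R' ⊂ R := Finset.erase_ssubset hdR
    have hdBf : d ∈ Bf := hRB hdR
    have hdnR' : d ∉ R' := Finset.notMem_erase d R
    have hdnBR : d ∉ Bf \ R := fun h => (Finset.mem_sdiff.1 h).2 hdR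
    have hsplit : Bf \ R' = insert d (Bf \ R) := by
      ext n
      simp only [Finset.mem_sdiff, Finset.mem_insert, hR'def, Finset.mem_erase]
      constructor
      · rintro ⟨hn, hn'⟩
        by_cases hnd : n = d
        · exact Or.inl hnd
        · exact Or.inr ⟨hn, fun hnR => hn' ⟨hnd, hnR⟩⟩
      · rintro (rfl | ⟨hn, hn'⟩)
        · exact ⟨hdBf, fun h => h.1 rfl⟩
        · exact ⟨hn, fun h => hn' h.2⟩
    have hRins : R = insert d R' := (Finset.insert_erase hdR).symm
    set w : X := u + ∑ i ∈ Bf \ R', s i • B.e i + (t:𝕜) • B.sgnSum δ R' with hw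
    have hsort' : ∀ i ∈ Bf \ R', ∀ d' ∈ R', ‖s i‖ ≤ ‖s d'‖ := by
      intro i hi d' hd'
      rw [hsplit] at hi
      rcases Finset.mem_insert.1 hi with rfl | hi
      · exact hdmin d' (Finset.mem_of_mem_erase hd')
      · exact hsort i hi d' (Finset.mem_of_mem_erase hd')
    have hwle : ‖w‖ ≤ ‖u + ∑ i ∈ Bf, s i • B.e i‖ :=
      ih R' hR'ss (fun n hn => hRB (Finset.mem_of_mem_erase hn)) hsort'
    -- current vector in terms of w
    have hsum : ∑ i ∈ Bf \ R', s i • B.e i = s d • B.e d + ∑ i ∈ Bf \ R, s i • B.e i := by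
      rw [hsplit, Finset.sum_insert hdnBR]
    have hsgn : B.sgnSum δ R = δ d • B.e d + B.sgnSum δ R' := by
      rw [hRins, sgnSum, Finset.sum_insert hdnR', sgnSum]
    set p : X := u + ∑ i ∈ Bf \ R, s i • B.e i + (t:𝕜) • B.sgnSum δ R' with hp
    have hwp : w = p + s d • B.e d := by
      rw [hw, hp, hsum]; abel
    have hcur : u + ∑ i ∈ Bf \ R, s i • B.e i + (t:𝕜) • B.sgnSum δ R
        = p + (t:𝕜) • (δ d • B.e d) := by
      rw [hp, hsgn, smul_add]; abel
    rcases eq_or_ne (s d) 0 with hsd0 | hsd0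
    · -- then t = 0
      have ht : t = 0 := le_antisymm (by simpa [hsd0] using hts d hdBf) ht0
      have : u + ∑ i ∈ Bf \ R, s i • B.e i + (t:𝕜) • B.sgnSum δ R = w := by
        rw [hcur, hwp, hsd0, ht]; simp
      rw [this]; exact hwle
    · -- coords of p
      have hpcoord : ∀ n, ‖B.coord n p‖ ≤ ‖s d‖ := by
        intro n
        have : B.coord n p = B.coord n u + (if n ∈ Bf \ R then s n else 0)
            + (t:𝕜) * (if n ∈ R' then δ n else 0) := by
          rw [hp, map_add, map_add, map_smul, smul_eq_mul, coord_sgnSum, coord_sum]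
        rw [this]
        have htsd : t ≤ ‖s d‖ := hts d hdBf
        by_cases h1 : n ∈ Bf \ R
        · have hnu : B.coord n u = 0 := hz n (Finset.mem_sdiff.1 h1).1
          have hnR' : n ∉ R' := fun h =>
            (Finset.mem_sdiff.1 h1).2 (Finset.mem_of_mem_erase h)
          rw [hnu, if_pos h1, if_neg hnR', mul_zero, add_zero, zero_add]
          exact hsort n h1 d hdR
        · by_cases h2 : n ∈ R'
          · have hnu : B.coord n u = 0 := hz n (hRB (Finset.mem_of_mem_erase h2))
            rw [hnu, if_neg h1, if_pos h2, add_zero, zero_add, norm_mul,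
              RCLike.norm_ofReal, abs_of_nonneg ht0]
            have hd1 : ‖δ n‖ = 1 := by
              have hsn0 : s n ≠ 0 := by
                intro h0
                have := hts n (hRB (Finset.mem_of_mem_erase h2))
                have := hdmin n (Finset.mem_of_mem_erase h2)
                have hsd : ‖s d‖ ≤ 0 := by simpa [h0] using this
                exact hsd0 (norm_le_zero_iff.1 hsd)
              rw [hδs n hsn0, norm_div, RCLike.norm_ofReal, abs_norm,
                div_self (norm_ne_zero_iff.2 hsn0)]
            rw [hd1, mul_one]
            exact htsd
          · rw [if_neg h1, if_neg h2, mul_zero, add_zero, add_zero]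
            exact le_trans (hu n) htsd
      have hpd : B.coord d p = 0 := by
        have : B.coord d p = B.coord d u + (if d ∈ Bf \ R then s d else 0)
            + (t:𝕜) * (if d ∈ R' then δ d else 0) := by
          rw [hp, map_add, map_add, map_smul, smul_eq_mul, coord_sgnSum, coord_sum]
        rw [this, hz d hdBf, if_neg hdnBR, if_neg hdnR', mul_zero, add_zero, add_zero]
      have hple : ‖p‖ ≤ ‖w‖ := by
        rw [hwp]
        exact B.suppr_step hP p d (s d) hsd0 hpcoord hpd
      -- convexity
      have hsdpos : (0:ℝ) < ‖s d‖ := norm_pos_iff.2 hsd0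
      set lam : ℝ := t / ‖s d‖ with hlam
      have hlam0 : 0 ≤ lam := div_nonneg ht0 (le_of_lt hsdpos)
      have hlam1 : lam ≤ 1 := (div_le_one hsdpos).2 (hts d hdBf)
      have hconv : p + (t:𝕜) • (δ d • B.e d)
          = (lam:𝕜) • w + ((1 - lam : ℝ):𝕜) • p := by
        have h1 : (t:𝕜) • (δ d • B.e d) = (lam:𝕜) • (s d • B.e d) := by
          rw [smul_smul, smul_smul, hδs d hsd0, hlam]
          congr 1
          rw [RCLike.ofReal_div, mul_div_assoc', div_mul_eq_mul_div, mul_comm]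
        rw [h1, hwp, smul_add]
        have h2 : ((1 - lam : ℝ):𝕜) • p = p - (lam:𝕜) • p := by
          rw [RCLike.ofReal_sub, sub_smul, RCLike.ofReal_one, one_smul]
        rw [h2]; abel
      rw [hcur, hconv]
      calc ‖(lam:𝕜) • w + ((1 - lam : ℝ):𝕜) • p‖
          ≤ ‖(lam:𝕜) • w‖ + ‖((1 - lam : ℝ):𝕜) • p‖ := norm_add_le _ _
        _ = lam * ‖w‖ + (1 - lam) * ‖p‖ := by
            rw [norm_smul, norm_smul, RCLike.norm_ofReal, RCLike.norm_ofReal,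
              abs_of_nonneg hlam0, abs_of_nonneg (by linarith : (0:ℝ) ≤ 1 - lam)]
        _ ≤ lam * ‖w‖ + (1 - lam) * ‖w‖ := by
            have := mul_le_mul_of_nonneg_left hple (by linarith : (0:ℝ) ≤ 1 - lam)
            linarith
        _ = ‖w‖ := by ring
        _ ≤ ‖u + ∑ i ∈ Bf, s i • B.e i‖ := hwle

end BasisOf

namespace BasisOf
variable {𝕜 X : Type*} [RCLike 𝕜] [NormedAddCommGroup X] [NormedSpace 𝕜 X]

lemma pslc_to_spg (B : BasisOf 𝕜 X) {seq : ℕ → ℕ} (hseq : StrictMono seq)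
    (hP : B.PSLCWith seq 1) : B.SPGWith seq 1 := by
  classical
  intro x m hm A hAcard hGr k hk
  rw [one_mul]
  have hA : A.Nonempty := Finset.card_pos.1 (hAcard ▸ hm)
  obtain ⟨a₀, ha₀, hmin⟩ := A.exists_min_image (fun a => ‖B.coord a x‖) hA
  set t := ‖B.coord a₀ x‖ with ht
  have ht0 : 0 ≤ t := norm_nonneg _
  have hout : ∀ b, b ∉ A → ‖B.coord b x‖ ≤ t := fun b hb => hGr a₀ ha₀ b hb
  set K := (Finset.range k).image seq with hKdef
  have hKmem : ∀ {n : ℕ}, n ∈ K ↔ ∃ i, i < k ∧ seq i = n := by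
    intro n; simp [hKdef, Finset.mem_image]
  set u := x - B.proj (A ∪ K) x with hu
  have hcoordu : ∀ n, B.coord n u = if n ∈ A ∪ K then 0 else B.coord n x := by
    intro n
    rw [hu, map_sub, coord_proj]
    split_ifs <;> simp
  have hunorm : ∀ n, ‖B.coord n u‖ ≤ t := by
    intro n
    rw [hcoordu]
    split_ifs with h
    · simpa using ht0
    · exact hout n (fun hn => h (Finset.mem_union_left _ hn))
  -- identities
  have hid1 : x - B.proj A x = u + ∑ n ∈ K \ A, B.coord n x • B.e n := by
    rw [hu]
    have : B.proj (A ∪ K) x = B.proj A x + ∑ n ∈ K \ A, B.coord n x • B.e n := by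
      rw [proj, proj, show A ∪ K = A ∪ (K \ A) from (Finset.union_sdiff_self_eq_union).symm,
        Finset.sum_union Finset.disjoint_sdiff]
    rw [this]; abel
  have hid2 : x - B.proj K x = u + ∑ n ∈ A \ K, B.coord n x • B.e n := by
    rw [hu]
    have : B.proj (A ∪ K) x = B.proj K x + ∑ n ∈ A \ K, B.coord n x • B.e n := by
      rw [proj, proj, show A ∪ K = K ∪ (A \ K) by
        rw [Finset.union_sdiff_self_eq_union, Finset.union_comm],
        Finset.sum_union Finset.disjoint_sdiff]
    rw [this]; abel
  have hprojSeq : B.projSeq seq k x = B.proj K x := by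
    rw [projSeq, proj, hKdef, Finset.sum_image]
    intro a _ b _ h
    exact hseq.injective h
  rw [hprojSeq, hid1, hid2]
  -- signs for the large coefficients
  set s : ℕ → 𝕜 := fun n => B.coord n x with hs
  set δ : ℕ → 𝕜 := fun n => if s n = 0 then 1 else s n / ((‖s n‖ : ℝ) : 𝕜) with hδ
  have hδ1 : ∀ n, ‖δ n‖ = 1 := by
    intro n; rw [hδ]; dsimp only
    split_ifs with hn
    · simp
    · rw [norm_div, RCLike.norm_ofReal, abs_norm, div_self (norm_ne_zero_iff.2 hn)]
  have hδs : ∀ n, s n ≠ 0 → δ n = s n / ((‖s n‖ : ℝ) : 𝕜) := by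
    intro n hn; rw [hδ]; simp [hn]
  -- truncation bound
  have hcoordu0 : ∀ d ∈ A \ K, B.coord d u = 0 := by
    intro d hd
    rw [hcoordu, if_pos (Finset.mem_union_left _ (Finset.mem_sdiff.1 hd).1)]
  have hts : ∀ d ∈ A \ K, t ≤ ‖s d‖ := by
    intro d hd
    exact hmin d (Finset.mem_sdiff.1 hd).1
  have htrunc : ‖u + (t:𝕜) • B.sgnSum δ (A \ K)‖ ≤ ‖u + ∑ n ∈ A \ K, s n • B.e n‖ := by
    have := B.trunc_bound hP u t s δ hδs hunorm (A \ K) hcoordu0 hts (A \ K)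
      (le_refl _) (by intro i hi; rw [Finset.sdiff_self] at hi; simp at hi)
    rw [Finset.sdiff_self, Finset.sum_empty, add_zero] at this
    exact this
  -- main bound via convexity over signs and PSLC
  apply B.convex_bound u (K \ A) (fun n => B.coord n x) t _
    (fun n hn => hout n (Finset.mem_sdiff.1 hn).2)
  intro ε hε
  refine le_trans ?_ htrunc
  -- step 2: PSLC
  rcases eq_or_lt_of_le ht0 with ht0' | htpos
  · rw [← ht0', RCLike.ofReal_zero, zero_smul, zero_smul, add_zero]
  have hKA_card : (K \ A).card ≤ (A \ K).card := by
    have h1 : (K \ A).card + (K ∩ A).card = K.card := Finset.card_sdiff_add_card_inter K A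
    have h2 : (A \ K).card + (A ∩ K).card = A.card := Finset.card_sdiff_add_card_inter A K
    have h3 : (K ∩ A).card = (A ∩ K).card := by rw [Finset.inter_comm]
    have h4 : K.card ≤ A.card := by
      rw [hKdef, Finset.card_image_of_injective _ hseq.injective, Finset.card_range, hAcard]
      exact hk
    omega
  have horder : ∀ a ∈ K \ A, ∀ j : ℕ, j ∉ K → j ∈ Set.range seq → a < j := by
    intro a ha j hjK hjr
    obtain ⟨i, hik, hia⟩ := hKmem.1 (Finset.mem_sdiff.1 ha).1
    obtain ⟨i', hi'⟩ := hjr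
    have hi'k : ¬ i' < k := fun h => hjK (hKmem.2 ⟨i', h, hi'⟩)
    rw [← hia, ← hi']
    exact hseq (lt_of_lt_of_le hik (le_of_not_gt hi'k))
  set xp : X := ((t⁻¹ : ℝ) : 𝕜) • u with hxp
  have hxpc : ∀ n, ‖B.coord n xp‖ ≤ 1 := by
    intro n
    rw [hxp, map_smul, smul_eq_mul, norm_mul, RCLike.norm_ofReal, abs_inv, abs_of_nonneg ht0]
    rw [inv_mul_le_iff₀ htpos, mul_one]
    exact hunorm n
  have htp : TPair seq (K \ A) (A \ K) := by
    refine ⟨?_, hKA_card, ?_⟩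
    · intro n hn
      obtain ⟨i, _, hi⟩ := hKmem.1 (Finset.mem_sdiff.1 (Finset.mem_coe.1 hn)).1
      exact ⟨i, hi⟩
    · intro a ha d hd hdr
      exact horder a ha d (Finset.mem_sdiff.1 hd).2 hdr
  have hPs := hP xp hxpc (K \ A) (A \ K) htp
    (by intro d hd
        rw [hxp, map_smul, smul_eq_mul,
          hcoordu, if_pos (Finset.mem_union_left _ (Finset.mem_sdiff.1 hd).1), mul_zero])
    (by intro a ha j hj hjr
        refine horder a ha j ?_ hjr
        intro hjK
        rcases hj with hj | hj
        · exact (Finset.mem_sdiff.1 hj).2 hjK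
        · apply hj
          rw [hxp, map_smul, smul_eq_mul, hcoordu,
            if_pos (Finset.mem_union_right _ hjK), mul_zero])
    ε δ hε hδ1
  rw [one_mul] at hPs
  have hscale : ∀ v : X, ((t : ℝ) : 𝕜) • (xp + v) = u + (t:𝕜) • v := by
    intro v
    rw [smul_add, hxp, smul_smul, ← RCLike.ofReal_mul, mul_inv_cancel₀ (ne_of_gt htpos)]
    simp
  calc ‖u + (t:𝕜) • B.sgnSum ε (K \ A)‖
      = ‖((t : ℝ) : 𝕜) • (xp + B.sgnSum ε (K \ A))‖ := by rw [hscale]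
    _ = t * ‖xp + B.sgnSum ε (K \ A)‖ := by
        rw [norm_smul, RCLike.norm_ofReal, abs_of_nonneg ht0]
    _ ≤ t * ‖xp + B.sgnSum δ (A \ K)‖ := mul_le_mul_of_nonneg_left hPs ht0
    _ = ‖((t : ℝ) : 𝕜) • (xp + B.sgnSum δ (A \ K))‖ := by
        rw [norm_smul, RCLike.norm_ofReal, abs_of_nonneg ht0]
    _ = ‖u + (t:𝕜) • B.sgnSum δ (A \ K)‖ := by rw [hscale]

end BasisOf

namespace BasisOf
variable {𝕜 X : Type*} [RCLike 𝕜] [NormedAddCommGroup X] [NormedSpace 𝕜 X]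

lemma spg_to_pslc (B : BasisOf 𝕜 X) {seq : ℕ → ℕ} (hseq : StrictMono seq)
    (hS : B.SPGWith seq 1) : B.PSLCWith seq 1 := by
  classical
  intro x hx A D hTD hD0 hAlt ε δ hε hδ
  obtain ⟨hAseq, hcard, hlt⟩ := hTD
  rw [one_mul]
  rcases D.eq_empty_or_nonempty with rfl | hD
  · have hA0 : A = ∅ := Finset.card_eq_zero.1 (le_antisymm (by simpa using hcard) (Nat.zero_le _))
    subst hA0
    simp [sgnSum]
  -- choose κ, K covering A with good properties
  obtain ⟨κ, hAK, hKfacts⟩ : ∃ κ : ℕ, A ⊆ (Finset.range κ).image seq ∧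
      ∀ g ∈ ((Finset.range κ).image seq) \ A, B.coord g x = 0 ∧ g ∉ D := by
    rcases A.eq_empty_or_nonempty with rfl | hA
    · exact ⟨0, by simp, by simp⟩
    · set amax := A.max' hA with hamax
      have hamaxA : amax ∈ A := A.max'_mem hA
      obtain ⟨i, hi⟩ := hAseq (Finset.mem_coe.2 hamaxA)
      refine ⟨i + 1, ?_, ?_⟩
      · intro a ha
        obtain ⟨j, hj⟩ := hAseq (Finset.mem_coe.2 ha)
        have hja : seq j ≤ seq i := by rw [hi, hj]; exact A.le_max' a ha
        have hji : j ≤ i := (hseq.le_iff_le).1 hja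
        exact Finset.mem_image.2 ⟨j, Finset.mem_range.2 (Nat.lt_succ_of_le hji), hj⟩
      · intro g hg
        obtain ⟨hgK, hgA⟩ := Finset.mem_sdiff.1 hg
        obtain ⟨i', hi'r, hi'⟩ := Finset.mem_image.1 hgK
        have hgle : g ≤ amax := by
          rw [← hi', ← hi]
          exact hseq.monotone (Nat.lt_succ_iff.1 (Finset.mem_range.1 hi'r))
        constructor
        · by_contra h0
          have := hAlt amax hamaxA g (Or.inr h0) ⟨i', hi'⟩
          omega
        · intro hgD
          have := hlt amax hamaxA g hgD ⟨i', hi'⟩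
          omega
  set K := (Finset.range κ).image seq with hKdef
  set G := K \ A with hGdef
  have hcoordA : ∀ a ∈ A, B.coord a x = 0 := by
    intro a ha
    by_contra h0
    exact lt_irrefl a (hAlt a ha a (Or.inr h0) (hAseq (Finset.mem_coe.2 ha)))
  have hAD : ∀ a ∈ A, a ∉ D := by
    intro a ha haD
    exact lt_irrefl a (hlt a ha a haD (hAseq (Finset.mem_coe.2 ha)))
  have hDG : Disjoint D G := by
    rw [Finset.disjoint_right]
    intro g hg
    exact (hKfacts g hg).2
  have hAG : Disjoint A G := Finset.disjoint_sdiff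
  set η : ℕ → 𝕜 := fun _ => 1 with hη
  set y : X := x + B.sgnSum ε A + B.sgnSum δ D + B.sgnSum η G with hy
  have hycoord : ∀ n, B.coord n y = B.coord n x + (if n ∈ A then ε n else 0)
      + (if n ∈ D then δ n else 0) + (if n ∈ G then η n else 0) := by
    intro n
    rw [hy, map_add, map_add, map_add, coord_sgnSum, coord_sgnSum, coord_sgnSum]
  have hyD : ∀ n ∈ D, B.coord n y = δ n := by
    intro n hn
    have hnA : n ∉ A := fun h => hAD n h hn
    have hnG : n ∉ G := Finset.disjoint_left.1 hDG hn
    rw [hycoord, hD0 n hn, if_pos hn, if_neg hnA, if_neg hnG]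
    simp
  have hyG : ∀ n ∈ G, B.coord n y = 1 := by
    intro n hn
    have hnA : n ∉ A := (Finset.mem_sdiff.1 hn).2
    have hnD : n ∉ D := (hKfacts n hn).2
    rw [hycoord, (hKfacts n hn).1, if_pos hn, if_neg hnA, if_neg hnD, hη]
    simp
  have hyA : ∀ n ∈ A, B.coord n y = ε n := by
    intro n hn
    have hnD : n ∉ D := hAD n hn
    have hnG : n ∉ G := Finset.disjoint_left.1 hAG hn
    rw [hycoord, hcoordA n hn, if_pos hn, if_neg hnD, if_neg hnG]
    simp
  have hyout : ∀ n, n ∉ A → n ∉ D → n ∉ G → B.coord n y = B.coord n x := by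
    intro n h1 h2 h3
    rw [hycoord, if_neg h1, if_neg h2, if_neg h3]
    simp
  have hgreedy : B.IsGreedySet y (D ∪ G) := by
    intro a ha b hb
    have hanorm : ‖B.coord a y‖ = 1 := by
      rcases Finset.mem_union.1 ha with h | h
      · rw [hyD a h]; exact hδ a
      · rw [hyG a h]; simp
    rw [hanorm]
    have hbD : b ∉ D := fun h => hb (Finset.mem_union_left _ h)
    have hbG : b ∉ G := fun h => hb (Finset.mem_union_right _ h)
    by_cases hbA : b ∈ A
    · rw [hyA b hbA, hε b]
    · rw [hyout b hbA hbD hbG]; exact hx b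
  have hKcard : K.card = κ := by
    rw [hKdef, Finset.card_image_of_injective _ hseq.injective, Finset.card_range]
  have hKAG : K = A ∪ G := by
    rw [hGdef, Finset.union_sdiff_of_subset hAK]
  have hκle : κ ≤ (D ∪ G).card := by
    rw [Finset.card_union_of_disjoint hDG, ← hKcard, hKAG,
      Finset.card_union_of_disjoint hAG]
    omega
  have hm1 : 1 ≤ (D ∪ G).card := by
    have : (D ∪ G).Nonempty := hD.mono Finset.subset_union_left
    exact Finset.card_pos.2 this
  have hmain := hS y ((D ∪ G).card) hm1 (D ∪ G) rfl hgreedy κ hκle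
  rw [one_mul] at hmain
  -- identify the two sides
  have hprojDG : B.proj (D ∪ G) y = B.sgnSum δ D + B.sgnSum η G := by
    rw [proj, Finset.sum_union hDG, sgnSum, sgnSum]
    congr 1
    · exact Finset.sum_congr rfl (fun n hn => by rw [hyD n hn])
    · exact Finset.sum_congr rfl (fun n hn => by rw [hyG n hn])
  have hprojseq : B.projSeq seq κ y = B.sgnSum ε A + B.sgnSum η G := by
    rw [projSeq]
    have himg : ∑ i ∈ Finset.range κ, B.coord (seq i) y • B.e (seq i)
        = ∑ n ∈ K, B.coord n y • B.e n := by
      rw [hKdef, Finset.sum_image (fun a _ b _ h => hseq.injective h)]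
    rw [himg, hKAG, Finset.sum_union hAG, sgnSum, sgnSum]
    congr 1
    · exact Finset.sum_congr rfl (fun n hn => by rw [hyA n hn])
    · exact Finset.sum_congr rfl (fun n hn => by rw [hyG n hn])
  have hlhs : y - B.proj (D ∪ G) y = x + B.sgnSum ε A := by
    rw [hprojDG, hy]; abel
  have hrhs : y - B.projSeq seq κ y = x + B.sgnSum δ D := by
    rw [hprojseq, hy]; abel
  rw [hlhs, hrhs] at hmain
  exact hmain

end BasisOf
/-- A basis is 1-(𝐧, strong partially greedy) iff it is 1-(𝐧, PSLC). -/
theorem statement9 {𝕜 X : Type*} [RCLike 𝕜] [NormedAddCommGroup X] [NormedSpace 𝕜 X]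
    [CompleteSpace X] (B : BasisOf 𝕜 X) (seq : ℕ → ℕ) (hseq : StrictMono seq) :
    B.SPGWith seq 1 ↔ B.PSLCWith seq 1 :=
  ⟨fun h => B.spg_to_pslc hseq h, fun h => B.pslc_to_spg hseq h⟩
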